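/- arXiv:2403.09133 — 2 statements merged into one kernel-verified Lean document; each statement's English description precedes it below -/
import Mathlib

section
/- Stationarity bound for the averaged point (second half of Theorem 2.1): Let (Ū, V̄, λ̄) be an ε-KKT point of the penalized problem with ‖Ū‖_F ≤ σ, ‖V̄‖_F ≤ σ and ‖λ̄‖_2 ≤ σ, and set Û = (Ū + V̄)/2. Then ‖2∇f(ÛÛᵀ)Û + 2 Σ_{i=1}^m λ̄_i A_i Û‖_F ≤ 2ε + (2L_0 σ³ + 3Lσ)(ε + L_f σ + √(s_A) σ²)² / (2γ²). -/
open Matrix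
open scoped BigOperators

noncomputable section

/-- Frobenius inner product of two real matrices. -/
def frobInner {α β : Type*} [Fintype α] [Fintype β] (X Y : Matrix α β ℝ) : ℝ :=
  ∑ i, ∑ j, X i j * Y i j

/-- Frobenius norm of a real matrix. -/
def frobNorm {α β : Type*} [Fintype α] [Fintype β] (X : Matrix α β ℝ) : ℝ :=
  Real.sqrt (∑ i, ∑ j, (X i j) ^ 2)

/-- Euclidean norm of a real vector. -/
def vecNorm {α : Type*} [Fintype α] (v : α → ℝ) : ℝ :=
  Real.sqrt (∑ i, (v i) ^ 2)

/-- The linear map `𝒜(X) = (⟨A 1, X⟩, …, ⟨A m, X⟩)`. -/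
def Aop {n m : ℕ} (A : Fin m → Matrix (Fin n) (Fin n) ℝ)
    (X : Matrix (Fin n) (Fin n) ℝ) : Fin m → ℝ :=
  fun i => frobInner (A i) X

/-- `s_A = Σ_i ‖A_i‖_F²`. -/
def sA {n m : ℕ} (A : Fin m → Matrix (Fin n) (Fin n) ℝ) : ℝ :=
  ∑ i, (frobNorm (A i)) ^ 2

/-- `(U, V, λ)` is an ε-KKT point of the penalized problem
`min f(UVᵀ) + (γ/2)‖U-V‖² s.t. 𝒜(UVᵀ) = b`, where `grad` denotes the gradient of `f`. -/
def IsPenEpsKKT {n m r : ℕ} (grad : Matrix (Fin n) (Fin n) ℝ → Matrix (Fin n) (Fin n) ℝ)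
    (A : Fin m → Matrix (Fin n) (Fin n) ℝ) (b : Fin m → ℝ) (γ ε : ℝ)
    (U V : Matrix (Fin n) (Fin r) ℝ) (lam : Fin m → ℝ) : Prop :=
  frobNorm (grad (U * Vᵀ) * V + γ • (U - V) + ∑ i, lam i • (A i * V)) ≤ ε ∧
  frobNorm (grad (V * Uᵀ) * U + γ • (V - U) + ∑ i, lam i • (A i * U)) ≤ ε ∧
  vecNorm (fun i => Aop A (U * Vᵀ) i - b i) ≤ ε

/-- `(U, λ)` is an ε-KKT point of the Burer–Monteiro problem
`min f(UUᵀ) s.t. 𝒜(UUᵀ) = b`, where `grad` denotes the gradient of `f`. -/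
def IsBMEpsKKT {n m r : ℕ} (grad : Matrix (Fin n) (Fin n) ℝ → Matrix (Fin n) (Fin n) ℝ)
    (A : Fin m → Matrix (Fin n) (Fin n) ℝ) (b : Fin m → ℝ) (ε : ℝ)
    (U : Matrix (Fin n) (Fin r) ℝ) (lam : Fin m → ℝ) : Prop :=
  frobNorm ((2 : ℝ) • (grad (U * Uᵀ) * U) + ∑ i, lam i • (A i * U)) ≤ ε ∧
  vecNorm (fun i => Aop A (U * Uᵀ) i - b i) ≤ ε

/-- The augmented Lagrangian `L_ρ(U,V,λ)` of the penalized problem. -/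
def augL {n m r : ℕ} (f : Matrix (Fin n) (Fin n) ℝ → ℝ)
    (A : Fin m → Matrix (Fin n) (Fin n) ℝ) (b : Fin m → ℝ) (ρ γ : ℝ)
    (U V : Matrix (Fin n) (Fin r) ℝ) (lam : Fin m → ℝ) : ℝ :=
  f (U * Vᵀ) + γ / 2 * (frobNorm (U - V)) ^ 2
    + ∑ i, lam i * (Aop A (U * Vᵀ) i - b i)
    + ρ / 2 * (vecNorm (fun i => Aop A (U * Vᵀ) i - b i)) ^ 2

/-- The level set `S_β` of the penalty function. -/
def Sset {n m r : ℕ} (f : Matrix (Fin n) (Fin n) ℝ → ℝ)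
    (A : Fin m → Matrix (Fin n) (Fin n) ℝ) (b : Fin m → ℝ) (ρ₀ β : ℝ) :
    Set (Matrix (Fin n) (Fin r) ℝ × Matrix (Fin n) (Fin r) ℝ) :=
  {p | f (p.1 * p.2ᵀ) + ρ₀ / 2 * (frobNorm (p.1 - p.2)) ^ 2
      + ρ₀ / 2 * (vecNorm (fun i => Aop A (p.1 * p.2ᵀ) i - b i)) ^ 2 ≤ β}

/-- `𝒞(U)`: the `nr × m` matrix whose `i`-th column is the vectorization of `A_i U`. -/
def Cmat {n m r : ℕ} (A : Fin m → Matrix (Fin n) (Fin n) ℝ)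
    (U : Matrix (Fin n) (Fin r) ℝ) : Matrix (Fin n × Fin r) (Fin m) ℝ :=
  Matrix.of fun p i => (A i * U) p.1 p.2

/-- Smallest singular value of a real matrix, as the infimum of `‖Mx‖` over unit vectors. -/
def sigmaMin {α β : Type*} [Fintype α] [Fintype β] (M : Matrix α β ℝ) : ℝ :=
  sInf {s | ∃ x : β → ℝ, vecNorm x = 1 ∧ s = vecNorm (M.mulVec x)}

/-- Norm of the full gradient of the augmented Lagrangian at `(U, V, λ)`
(for symmetric `f`, with `grad` the gradient of `f`). -/
def gradAugLNorm {n m r : ℕ} (grad : Matrix (Fin n) (Fin n) ℝ → Matrix (Fin n) (Fin n) ℝ)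
    (A : Fin m → Matrix (Fin n) (Fin n) ℝ) (b : Fin m → ℝ) (ρ γ : ℝ)
    (U V : Matrix (Fin n) (Fin r) ℝ) (lam : Fin m → ℝ) : ℝ :=
  Real.sqrt
    ((frobNorm (grad (U * Vᵀ) * V + γ • (U - V)
        + ∑ i, (lam i + ρ * (Aop A (U * Vᵀ) i - b i)) • (A i * V))) ^ 2
      + (frobNorm (grad (V * Uᵀ) * U + γ • (V - U)
        + ∑ i, (lam i + ρ * (Aop A (U * Vᵀ) i - b i)) • (A i * U))) ^ 2
      + (vecNorm (fun i => Aop A (U * Vᵀ) i - b i)) ^ 2)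

/-- Distance between two primal-dual triples, induced by the Frobenius/Euclidean norms. -/
def tripDist {n m r : ℕ}
    (p q : Matrix (Fin n) (Fin r) ℝ × Matrix (Fin n) (Fin r) ℝ × (Fin m → ℝ)) : ℝ :=
  Real.sqrt ((frobNorm (p.1 - q.1)) ^ 2 + (frobNorm (p.2.1 - q.2.1)) ^ 2
    + (vecNorm (fun i => p.2.2 i - q.2.2 i)) ^ 2)

/-- The set `𝒲` of KKT points of the penalized problem. -/
def KKTset {n m : ℕ} (r : ℕ) (grad : Matrix (Fin n) (Fin n) ℝ → Matrix (Fin n) (Fin n) ℝ)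
    (A : Fin m → Matrix (Fin n) (Fin n) ℝ) (b : Fin m → ℝ) (γ : ℝ) :
    Set (Matrix (Fin n) (Fin r) ℝ × Matrix (Fin n) (Fin r) ℝ × (Fin m → ℝ)) :=
  {p | IsPenEpsKKT grad A b γ 0 p.1 p.2.1 p.2.2}

def vecM {α β : Type*} [Fintype α] [Fintype β] (X : Matrix α β ℝ) :
    EuclideanSpace ℝ (α × β) := WithLp.toLp 2 (fun p : α × β => X p.1 p.2)

lemma frobNorm_eq_norm {α β : Type*} [Fintype α] [Fintype β] (X : Matrix α β ℝ) :
    frobNorm X = ‖vecM X‖ := by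
  rw [EuclideanSpace.norm_eq, frobNorm, Fintype.sum_prod_type]
  simp [vecM, Real.norm_eq_abs, sq_abs]

lemma vecM_add {α β : Type*} [Fintype α] [Fintype β] (X Y : Matrix α β ℝ) :
    vecM (X + Y) = vecM X + vecM Y := rfl
lemma vecM_sub {α β : Type*} [Fintype α] [Fintype β] (X Y : Matrix α β ℝ) :
    vecM (X - Y) = vecM X - vecM Y := rfl
lemma vecM_smul {α β : Type*} [Fintype α] [Fintype β] (c : ℝ) (X : Matrix α β ℝ) :
    vecM (c • X) = c • vecM X := rfl
lemma vecM_sum {α β ι : Type*} [Fintype α] [Fintype β] (s : Finset ι) (M : ι → Matrix α β ℝ) :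
    vecM (∑ i ∈ s, M i) = ∑ i ∈ s, vecM (M i) := by
  induction s using Finset.cons_induction with
  | empty => rfl
  | cons i s hi ih => rw [Finset.sum_cons, Finset.sum_cons, vecM_add, ih]

lemma frobNorm_nonneg {α β : Type*} [Fintype α] [Fintype β] (X : Matrix α β ℝ) :
    0 ≤ frobNorm X := Real.sqrt_nonneg _
lemma frobNorm_add_le {α β : Type*} [Fintype α] [Fintype β] (X Y : Matrix α β ℝ) :
    frobNorm (X + Y) ≤ frobNorm X + frobNorm Y := by
  simp only [frobNorm_eq_norm, vecM_add]; exact norm_add_le _ _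
lemma frobNorm_smul {α β : Type*} [Fintype α] [Fintype β] (c : ℝ) (X : Matrix α β ℝ) :
    frobNorm (c • X) = |c| * frobNorm X := by
  simp only [frobNorm_eq_norm, vecM_smul, norm_smul, Real.norm_eq_abs]
lemma frobNorm_sub_le {α β : Type*} [Fintype α] [Fintype β] (X Y : Matrix α β ℝ) :
    frobNorm (X - Y) ≤ frobNorm X + frobNorm Y := by
  simp only [frobNorm_eq_norm, vecM_sub]; exact norm_sub_le _ _
lemma frobNorm_sum_le {α β ι : Type*} [Fintype α] [Fintype β] (s : Finset ι)
    (M : ι → Matrix α β ℝ) :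
    frobNorm (∑ i ∈ s, M i) ≤ ∑ i ∈ s, frobNorm (M i) := by
  simp only [frobNorm_eq_norm, vecM_sum]
  exact (norm_sum_le _ _).trans (le_of_eq rfl)
lemma frobNorm_transpose {α β : Type*} [Fintype α] [Fintype β] (X : Matrix α β ℝ) :
    frobNorm Xᵀ = frobNorm X := by
  rw [frobNorm, frobNorm, Finset.sum_comm]; rfl
lemma frobNorm_mul_le {α β γ' : Type*} [Fintype α] [Fintype β] [Fintype γ']
    (X : Matrix α β ℝ) (Y : Matrix β γ' ℝ) :
    frobNorm (X * Y) ≤ frobNorm X * frobNorm Y := by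
  rw [frobNorm, frobNorm, frobNorm, ← Real.sqrt_mul (by positivity)]
  apply Real.sqrt_le_sqrt
  calc ∑ i, ∑ j, ((X * Y) i j) ^ 2
      ≤ ∑ i, ∑ j, (∑ k, (X i k)^2) * (∑ k, (Y k j)^2) := by
        apply Finset.sum_le_sum; intro i _; apply Finset.sum_le_sum; intro j _
        rw [Matrix.mul_apply]
        exact Finset.sum_mul_sq_le_sq_mul_sq _ _ _
    _ = (∑ i, ∑ k, (X i k)^2) * (∑ k, ∑ j, (Y k j)^2) := by
        rw [Finset.sum_mul_sum]
        apply Finset.sum_congr rfl; intro i _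
        rw [← Finset.mul_sum, ← Finset.mul_sum, Finset.sum_comm]

section Key
variable {n : ℕ}
variable (grad : Matrix (Fin n) (Fin n) ℝ → Matrix (Fin n) (Fin n) ℝ)
variable (hess : Matrix (Fin n) (Fin n) ℝ → Matrix (Fin n) (Fin n) ℝ → Matrix (Fin n) (Fin n) ℝ)

lemma hasDerivAt_grad_line
    (hhess : ∀ X H : Matrix (Fin n) (Fin n) ℝ, ∀ i j,
      HasDerivAt (fun t : ℝ => grad (X + t • H) i j) (hess X H i j) 0)
    (Y S : Matrix (Fin n) (Fin n) ℝ) (i j : Fin n) (t₀ : ℝ) :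
    HasDerivAt (fun t : ℝ => grad (Y + t • S) i j) (hess (Y + t₀ • S) S i j) t₀ := by
  have h := hhess (Y + t₀ • S) S i j
  have hfun : (fun s : ℝ => grad (Y + t₀ • S + s • S) i j)
      = (fun s : ℝ => grad (Y + (t₀ + s) • S) i j) := by
    funext s; rw [add_smul, add_assoc]
  rw [hfun] at h
  have hin : HasDerivAt (fun t : ℝ => t - t₀) 1 t₀ := (hasDerivAt_id t₀).sub_const t₀
  have h3 : HasDerivAt ((fun s : ℝ => grad (Y + (t₀ + s) • S) i j) ∘ (fun t : ℝ => t - t₀))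
      (hess (Y + t₀ • S) S i j * 1) t₀ := by
    apply HasDerivAt.comp
    · simpa using h
    · exact hin
  have hfun2 : ((fun s : ℝ => grad (Y + (t₀ + s) • S) i j) ∘ (fun t : ℝ => t - t₀))
      = fun t : ℝ => grad (Y + t • S) i j := by
    funext t; simp only [Function.comp]; congr 2; ring
  rw [hfun2, mul_one] at h3
  exact h3

lemma hess_neg
    (hhess : ∀ X H : Matrix (Fin n) (Fin n) ℝ, ∀ i j,
      HasDerivAt (fun t : ℝ => grad (X + t • H) i j) (hess X H i j) 0)
    (X S : Matrix (Fin n) (Fin n) ℝ) : hess X (-S) = - hess X S := by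
  ext i j
  have h1 := hhess X (-S) i j
  have h2 : HasDerivAt (fun t : ℝ => grad (X + t • (-S)) i j) (-hess X S i j) 0 := by
    have hout := hhess X S i j
    have hin : HasDerivAt (fun t : ℝ => -t) (-1 : ℝ) 0 := hasDerivAt_neg 0
    have h3 : HasDerivAt ((fun s : ℝ => grad (X + s • S) i j) ∘ (fun t : ℝ => -t))
        (hess X S i j * (-1)) 0 := by
      apply HasDerivAt.comp
      · simpa using hout
      · exact hin
    have hfun : ((fun s : ℝ => grad (X + s • S) i j) ∘ (fun t : ℝ => -t))
        = fun t : ℝ => grad (X + t • (-S)) i j := by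
      funext t; simp only [Function.comp]; rw [neg_smul, smul_neg]
    rw [hfun, mul_neg_one] at h3
    exact h3
  exact h1.unique h2

lemma key_second_order
    (hhess : ∀ X H : Matrix (Fin n) (Fin n) ℝ, ∀ i j,
      HasDerivAt (fun t : ℝ => grad (X + t • H) i j) (hess X H i j) 0)
    (σ L0 : ℝ) (hL0 : 0 ≤ L0)
    (hhessLip : ∀ X Y H : Matrix (Fin n) (Fin n) ℝ, frobNorm X ≤ σ ^ 2 → frobNorm Y ≤ σ ^ 2 →
      frobNorm (hess X H - hess Y H) ≤ L0 * frobNorm H * frobNorm (X - Y))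
    (Y S : Matrix (Fin n) (Fin n) ℝ)
    (hmem : ∀ t ∈ Set.Icc (0:ℝ) 1,
      frobNorm (Y + t • S) ≤ σ ^ 2 ∧ frobNorm (Y - t • S) ≤ σ ^ 2) :
    frobNorm (grad (Y + S) + grad (Y - S) - grad Y - grad Y) ≤ L0 * frobNorm S ^ 2 := by
  set E := EuclideanSpace ℝ (Fin n × Fin n)
  set Φ : ℝ → E := fun t => vecM (grad (Y + t • S) + grad (Y - t • S)) with hΦ
  set Φ' : ℝ → E := fun t => vecM (hess (Y + t • S) S - hess (Y - t • S) S) with hΦ'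
  -- derivative
  have hderiv : ∀ t : ℝ, HasDerivAt Φ (Φ' t) t := by
    intro t
    have hpi : HasDerivAt (fun u : ℝ => (fun p : Fin n × Fin n =>
          grad (Y + u • S) p.1 p.2 + grad (Y - u • S) p.1 p.2))
        (fun p : Fin n × Fin n =>
          hess (Y + t • S) S p.1 p.2 - hess (Y - t • S) S p.1 p.2) t := by
      rw [hasDerivAt_pi]
      intro p
      have h1 := hasDerivAt_grad_line grad hess hhess Y S p.1 p.2 t
      have h2 : HasDerivAt (fun u : ℝ => grad (Y - u • S) p.1 p.2)
          (- hess (Y - t • S) S p.1 p.2) t := by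
        have h3 := hasDerivAt_grad_line grad hess hhess Y (-S) p.1 p.2 t
        have hfun : (fun u : ℝ => grad (Y + u • (-S)) p.1 p.2)
            = fun u : ℝ => grad (Y - u • S) p.1 p.2 := by
          funext u; rw [smul_neg, ← sub_eq_add_neg]
        rw [hfun, hess_neg grad hess hhess] at h3
        have : Y + t • (-S) = Y - t • S := by rw [smul_neg, ← sub_eq_add_neg]
        rw [this] at h3
        simpa using h3
      have := h1.add h2
      simpa [sub_eq_add_neg, Pi.add_def] using this
    have := ((EuclideanSpace.equiv (Fin n × Fin n) ℝ).symm.toContinuousLinearMap.hasFDerivAt).comp_hasDerivAt t hpi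
    exact this
  -- Lipschitz bound on Φ'
  have hlipΦ' : ∀ t ∈ Set.Icc (0:ℝ) 1, ∀ t' ∈ Set.Icc (0:ℝ) 1,
      ‖Φ' t - Φ' t'‖ ≤ 2 * L0 * frobNorm S ^ 2 * |t - t'| := by
    intro t ht t' ht'
    have hid : Φ' t - Φ' t' = vecM ((hess (Y + t • S) S - hess (Y + t' • S) S)
        - (hess (Y - t • S) S - hess (Y - t' • S) S)) := by
      simp only [hΦ', vecM_sub]; abel
    rw [hid, ← frobNorm_eq_norm]
    have h1 := hhessLip (Y + t • S) (Y + t' • S) S (hmem t ht).1 (hmem t' ht').1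
    have h2 := hhessLip (Y - t • S) (Y - t' • S) S (hmem t ht).2 (hmem t' ht').2
    have e1 : Y + t • S - (Y + t' • S) = (t - t') • S := by
      rw [sub_smul]; abel
    have e2 : Y - t • S - (Y - t' • S) = -((t - t') • S) := by
      rw [sub_smul]; abel
    rw [e1] at h1
    rw [e2] at h2
    have hns : frobNorm (-((t - t') • S)) = frobNorm ((t - t') • S) := by
      have : -((t - t') • S) = (-1 : ℝ) • ((t - t') • S) := by simp
      rw [this, frobNorm_smul]; simp
    rw [hns] at h2
    calc frobNorm _ ≤ frobNorm (hess (Y + t • S) S - hess (Y + t' • S) S)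
          + frobNorm (hess (Y - t • S) S - hess (Y - t' • S) S) := frobNorm_sub_le _ _
      _ ≤ L0 * frobNorm S * frobNorm ((t - t') • S) + L0 * frobNorm S * frobNorm ((t - t') • S) := by
          linarith
      _ = 2 * L0 * frobNorm S ^ 2 * |t - t'| := by
          rw [frobNorm_smul]; ring
  have hcontΦ' : ContinuousOn Φ' (Set.Icc (0:ℝ) 1) := by
    apply LipschitzOnWith.continuousOn (K := Real.toNNReal (2 * L0 * frobNorm S ^ 2))
    apply LipschitzOnWith.of_dist_le_mul
    intro t ht t' ht'
    rw [dist_eq_norm, Real.dist_eq]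
    calc ‖Φ' t - Φ' t'‖ ≤ 2 * L0 * frobNorm S ^ 2 * |t - t'| := hlipΦ' t ht t' ht'
      _ ≤ Real.toNNReal (2 * L0 * frobNorm S ^ 2) * |t - t'| := by
          apply mul_le_mul_of_nonneg_right _ (abs_nonneg _)
          exact Real.le_coe_toNNReal _
  have hint : IntervalIntegrable Φ' MeasureTheory.volume 0 1 := by
    apply ContinuousOn.intervalIntegrable
    rwa [Set.uIcc_of_le (by norm_num : (0:ℝ) ≤ 1)]
  have hftc : ∫ t in (0:ℝ)..1, Φ' t = Φ 1 - Φ 0 :=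
    intervalIntegral.integral_eq_sub_of_hasDerivAt (fun t _ => hderiv t) hint
  -- pointwise norm bound of Φ'
  have hptw : ∀ t ∈ Set.Icc (0:ℝ) 1, ‖Φ' t‖ ≤ 2 * L0 * frobNorm S ^ 2 * t := by
    intro t ht
    have h := hhessLip (Y + t • S) (Y - t • S) S (hmem t ht).1 (hmem t ht).2
    have e : Y + t • S - (Y - t • S) = (2 * t) • S := by
      rw [two_mul, add_smul]; abel
    rw [e, frobNorm_smul] at h
    have habs : |2 * t| = 2 * t := abs_of_nonneg (by linarith [ht.1])
    rw [habs] at h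
    calc ‖Φ' t‖ = frobNorm (hess (Y + t • S) S - hess (Y - t • S) S) :=
          (frobNorm_eq_norm _).symm
      _ ≤ L0 * frobNorm S * (2 * t * frobNorm S) := h
      _ = 2 * L0 * frobNorm S ^ 2 * t := by ring
  -- integral bound
  have hbound : ‖Φ 1 - Φ 0‖ ≤ L0 * frobNorm S ^ 2 := by
    rw [← hftc]
    calc ‖∫ t in (0:ℝ)..1, Φ' t‖ ≤ ∫ t in (0:ℝ)..1, ‖Φ' t‖ :=
          intervalIntegral.norm_integral_le_integral_norm (by norm_num)
      _ ≤ ∫ t in (0:ℝ)..1, 2 * L0 * frobNorm S ^ 2 * t := by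
          apply intervalIntegral.integral_mono_on (by norm_num)
          · exact hint.norm
          · apply ContinuousOn.intervalIntegrable
            fun_prop
          · exact hptw
      _ = L0 * frobNorm S ^ 2 := by
          rw [intervalIntegral.integral_const_mul, integral_id]; ring
  have hid2 : Φ 1 - Φ 0 = vecM (grad (Y + S) + grad (Y - S) - grad Y - grad Y) := by
    simp only [hΦ, one_smul, zero_smul, add_zero, sub_zero, vecM_sub, vecM_add]
    abel
  rw [frobNorm_eq_norm, ← hid2]
  exact hbound
end Key


set_option maxHeartbeats 2000000 in
/-- second half of Theorem 2.1: stationarity bound for the averaged point. -/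
theorem stationarity_bound_averaged_point
    (n m r : ℕ) (hn : 0 < n) (hm : 0 < m) (hr : 0 < r)
    (f : Matrix (Fin n) (Fin n) ℝ → ℝ)
    (hconv : ConvexOn ℝ Set.univ f)
    (hsym : ∀ X : Matrix (Fin n) (Fin n) ℝ, f Xᵀ = f X)
    (grad : Matrix (Fin n) (Fin n) ℝ → Matrix (Fin n) (Fin n) ℝ)
    (hgrad : ∀ X H : Matrix (Fin n) (Fin n) ℝ,
      HasDerivAt (fun t : ℝ => f (X + t • H)) (frobInner (grad X) H) 0)
    (hgradCont : Continuous grad)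
    (hess : Matrix (Fin n) (Fin n) ℝ → Matrix (Fin n) (Fin n) ℝ → Matrix (Fin n) (Fin n) ℝ)
    (hhess : ∀ X H : Matrix (Fin n) (Fin n) ℝ, ∀ i j,
      HasDerivAt (fun t : ℝ => grad (X + t • H) i j) (hess X H i j) 0)
    (A : Fin m → Matrix (Fin n) (Fin n) ℝ) (hAsym : ∀ i, (A i)ᵀ = A i)
    (b : Fin m → ℝ)
    (σ Lf L L0 γ : ℝ)
    (hσ : 0 < σ) (hLf : 0 < Lf) (hL : 0 < L) (hL0 : 0 < L0) (hγ : 0 < γ)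
    (hgradB : ∀ X : Matrix (Fin n) (Fin n) ℝ, frobNorm X ≤ σ ^ 2 → frobNorm (grad X) ≤ Lf)
    (hgradLip : ∀ X Y : Matrix (Fin n) (Fin n) ℝ, frobNorm X ≤ σ ^ 2 → frobNorm Y ≤ σ ^ 2 →
      frobNorm (grad X - grad Y) ≤ L * frobNorm (X - Y))
    (hhessLip : ∀ X Y H : Matrix (Fin n) (Fin n) ℝ, frobNorm X ≤ σ ^ 2 → frobNorm Y ≤ σ ^ 2 →
      frobNorm (hess X H - hess Y H) ≤ L0 * frobNorm H * frobNorm (X - Y))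
    (ε : ℝ) (hε : 0 ≤ ε)
    (Ub Vb : Matrix (Fin n) (Fin r) ℝ) (lamb : Fin m → ℝ)
    (hKKT : IsPenEpsKKT grad A b γ ε Ub Vb lamb)
    (hUb : frobNorm Ub ≤ σ) (hVb : frobNorm Vb ≤ σ) (hlamb : vecNorm lamb ≤ σ)
    (Uh : Matrix (Fin n) (Fin r) ℝ) (hUh : Uh = (2 : ℝ)⁻¹ • (Ub + Vb))
    :
    frobNorm ((2 : ℝ) • (grad (Uh * Uhᵀ) * Uh) + (2 : ℝ) • ∑ i, lamb i • (A i * Uh))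
      ≤ 2 * ε + (2 * L0 * σ ^ 3 + 3 * L * σ) * (ε + Lf * σ + Real.sqrt (sA A) * σ ^ 2) ^ 2
          / (2 * γ ^ 2) := by

  obtain ⟨hK1, hK2, hK3⟩ := hKKT
  set D : Matrix (Fin n) (Fin r) ℝ := Ub - Vb with hDdef
  set dl : ℝ := ε + Lf * σ + Real.sqrt (sA A) * σ ^ 2 with hdl
  have hsA0 : 0 ≤ Real.sqrt (sA A) := Real.sqrt_nonneg _
  have hdl0 : 0 ≤ dl := by positivity
  -- basic norm bounds
  have hUhn : frobNorm Uh ≤ σ := by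
    rw [hUh, frobNorm_smul]
    have := frobNorm_add_le Ub Vb
    rw [abs_of_pos (by norm_num : (0:ℝ) < (2:ℝ)⁻¹)]
    linarith
  have hXhat : frobNorm (Uh * Uhᵀ) ≤ σ ^ 2 := by
    calc frobNorm (Uh * Uhᵀ) ≤ frobNorm Uh * frobNorm Uhᵀ := frobNorm_mul_le _ _
      _ ≤ σ * σ := by
          rw [frobNorm_transpose]
          exact mul_le_mul hUhn hUhn (frobNorm_nonneg _) hσ.le
      _ = σ ^ 2 := (sq σ).symm
  have hP : frobNorm (Ub * Vbᵀ) ≤ σ ^ 2 := by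
    calc frobNorm (Ub * Vbᵀ) ≤ frobNorm Ub * frobNorm Vbᵀ := frobNorm_mul_le _ _
      _ ≤ σ * σ := by
          rw [frobNorm_transpose]
          exact mul_le_mul hUb hVb (frobNorm_nonneg _) hσ.le
      _ = σ ^ 2 := (sq σ).symm
  have hQ : frobNorm (Vb * Ubᵀ) ≤ σ ^ 2 := by
    calc frobNorm (Vb * Ubᵀ) ≤ frobNorm Vb * frobNorm Ubᵀ := frobNorm_mul_le _ _
      _ ≤ σ * σ := by
          rw [frobNorm_transpose]
          exact mul_le_mul hVb hUb (frobNorm_nonneg _) hσ.le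
      _ = σ ^ 2 := (sq σ).symm
  -- bound on the multiplier sum
  have hsumA : frobNorm (∑ i, lamb i • (A i * Vb)) ≤ Real.sqrt (sA A) * σ ^ 2 := by
    calc frobNorm (∑ i, lamb i • (A i * Vb)) ≤ ∑ i, frobNorm (lamb i • (A i * Vb)) :=
          frobNorm_sum_le _ _
      _ = ∑ i, |lamb i| * frobNorm (A i * Vb) := by
          simp only [frobNorm_smul]
      _ ≤ ∑ i, |lamb i| * (frobNorm (A i) * σ) := by
          apply Finset.sum_le_sum; intro i _
          apply mul_le_mul_of_nonneg_left _ (abs_nonneg _)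
          calc frobNorm (A i * Vb) ≤ frobNorm (A i) * frobNorm Vb := frobNorm_mul_le _ _
            _ ≤ frobNorm (A i) * σ :=
                mul_le_mul_of_nonneg_left hVb (frobNorm_nonneg _)
      _ = (∑ i, |lamb i| * frobNorm (A i)) * σ := by
          rw [Finset.sum_mul]; apply Finset.sum_congr rfl; intro i _; ring
      _ ≤ (Real.sqrt (∑ i, |lamb i| ^ 2) * Real.sqrt (∑ i, frobNorm (A i) ^ 2)) * σ := by
          apply mul_le_mul_of_nonneg_right _ hσ.le
          exact Real.sum_mul_le_sqrt_mul_sqrt _ _ _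
      _ ≤ Real.sqrt (sA A) * σ ^ 2 := by
          have h1 : Real.sqrt (∑ i, |lamb i| ^ 2) = vecNorm lamb := by
            rw [vecNorm]; congr 1; apply Finset.sum_congr rfl; intro i _; rw [sq_abs]
          have h2 : Real.sqrt (∑ i, frobNorm (A i) ^ 2) = Real.sqrt (sA A) := rfl
          rw [h1, h2]
          calc vecNorm lamb * Real.sqrt (sA A) * σ ≤ σ * Real.sqrt (sA A) * σ := by
                apply mul_le_mul_of_nonneg_right _ hσ.le
                exact mul_le_mul_of_nonneg_right hlamb hsA0
            _ = Real.sqrt (sA A) * σ ^ 2 := by ring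
  -- bound on D
  have hgP : frobNorm (grad (Ub * Vbᵀ)) ≤ Lf := hgradB _ hP
  have hDb : γ * frobNorm D ≤ dl := by
    have hid : γ • (Ub - Vb)
        = (grad (Ub * Vbᵀ) * Vb + γ • (Ub - Vb) + ∑ i, lamb i • (A i * Vb))
          - grad (Ub * Vbᵀ) * Vb - ∑ i, lamb i • (A i * Vb) := by abel
    have h1 : frobNorm (γ • (Ub - Vb)) ≤ ε + Lf * σ + Real.sqrt (sA A) * σ ^ 2 := by
      rw [hid]
      calc frobNorm _ ≤ frobNorm ((grad (Ub * Vbᵀ) * Vb + γ • (Ub - Vb)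
              + ∑ i, lamb i • (A i * Vb)) - grad (Ub * Vbᵀ) * Vb)
            + frobNorm (∑ i, lamb i • (A i * Vb)) := frobNorm_sub_le _ _
        _ ≤ (frobNorm (grad (Ub * Vbᵀ) * Vb + γ • (Ub - Vb) + ∑ i, lamb i • (A i * Vb))
              + frobNorm (grad (Ub * Vbᵀ) * Vb)) + frobNorm (∑ i, lamb i • (A i * Vb)) := by
            have := frobNorm_sub_le (grad (Ub * Vbᵀ) * Vb + γ • (Ub - Vb)
              + ∑ i, lamb i • (A i * Vb)) (grad (Ub * Vbᵀ) * Vb)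
            linarith
        _ ≤ ε + Lf * σ + Real.sqrt (sA A) * σ ^ 2 := by
            have h2 : frobNorm (grad (Ub * Vbᵀ) * Vb) ≤ Lf * σ := by
              calc frobNorm (grad (Ub * Vbᵀ) * Vb)
                  ≤ frobNorm (grad (Ub * Vbᵀ)) * frobNorm Vb := frobNorm_mul_le _ _
                _ ≤ Lf * σ := mul_le_mul hgP hVb (frobNorm_nonneg _) hLf.le
            linarith [hK1, hsumA]
    rw [frobNorm_smul, abs_of_pos hγ] at h1
    exact h1
  have hDdl : frobNorm D ≤ dl / γ := by
    rw [le_div_iff₀ hγ]; linarith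
  -- the matrices S, Yc
  set Pm : Matrix (Fin n) (Fin n) ℝ := Ub * Vbᵀ with hPm
  set Qm : Matrix (Fin n) (Fin n) ℝ := Vb * Ubᵀ with hQm
  set S : Matrix (Fin n) (Fin n) ℝ := (2:ℝ)⁻¹ • (Pm - Qm) with hS
  set Yc : Matrix (Fin n) (Fin n) ℝ := (2:ℝ)⁻¹ • (Pm + Qm) with hYc
  have hYpS : Yc + S = Pm := by rw [hS, hYc]; module
  have hYmS : Yc - S = Qm := by rw [hS, hYc]; module
  have hXY : Uh * Uhᵀ = Yc + (4:ℝ)⁻¹ • (D * Dᵀ) := by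
    have e1 : Uh * Uhᵀ = (4:ℝ)⁻¹ • ((Ub + Vb) * (Ub + Vb)ᵀ) := by
      rw [hUh, Matrix.transpose_smul, Matrix.smul_mul, Matrix.mul_smul, smul_smul]
      norm_num
    have e2 : (Ub + Vb) * (Ub + Vb)ᵀ = Ub * Ubᵀ + Ub * Vbᵀ + Vb * Ubᵀ + Vb * Vbᵀ := by
      rw [Matrix.transpose_add, Matrix.add_mul, Matrix.mul_add, Matrix.mul_add]; abel
    have e3 : D * Dᵀ = Ub * Ubᵀ - Ub * Vbᵀ - Vb * Ubᵀ + Vb * Vbᵀ := by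
      rw [hDdef, Matrix.transpose_sub, Matrix.sub_mul, Matrix.mul_sub, Matrix.mul_sub]; abel
    rw [e1, e2, e3, hYc, hPm, hQm]; module
  have hSid : (2:ℝ) • S = D * Vbᵀ - Vb * Dᵀ := by
    rw [hS, hPm, hQm, hDdef, Matrix.transpose_sub, Matrix.sub_mul, Matrix.mul_sub]; module
  have hSn : frobNorm S ≤ σ * frobNorm D := by
    have h1 : frobNorm ((2:ℝ) • S) = 2 * frobNorm S := by
      rw [frobNorm_smul]; norm_num
    have h2 : frobNorm (D * Vbᵀ - Vb * Dᵀ) ≤ 2 * (σ * frobNorm D) := by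
      calc frobNorm (D * Vbᵀ - Vb * Dᵀ) ≤ frobNorm (D * Vbᵀ) + frobNorm (Vb * Dᵀ) :=
            frobNorm_sub_le _ _
        _ ≤ frobNorm D * frobNorm Vbᵀ + frobNorm Vb * frobNorm Dᵀ :=
            add_le_add (frobNorm_mul_le _ _) (frobNorm_mul_le _ _)
        _ ≤ 2 * (σ * frobNorm D) := by
            rw [frobNorm_transpose, frobNorm_transpose]
            have := mul_le_mul_of_nonneg_left hVb (frobNorm_nonneg D)
            have := mul_le_mul_of_nonneg_right hVb (frobNorm_nonneg D)
            nlinarith [frobNorm_nonneg D]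
    rw [hSid] at h1
    linarith
  have hEn : frobNorm ((4:ℝ)⁻¹ • (D * Dᵀ)) ≤ frobNorm D ^ 2 / 4 := by
    rw [frobNorm_smul, abs_of_pos (by norm_num : (0:ℝ) < (4:ℝ)⁻¹)]
    have : frobNorm (D * Dᵀ) ≤ frobNorm D * frobNorm Dᵀ := frobNorm_mul_le _ _
    rw [frobNorm_transpose] at this
    calc (4:ℝ)⁻¹ * frobNorm (D * Dᵀ) ≤ (4:ℝ)⁻¹ * (frobNorm D * frobNorm D) := by
          apply mul_le_mul_of_nonneg_left this; norm_num
      _ = frobNorm D ^ 2 / 4 := by ring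
  -- memberships
  have hmem : ∀ t ∈ Set.Icc (0:ℝ) 1,
      frobNorm (Yc + t • S) ≤ σ ^ 2 ∧ frobNorm (Yc - t • S) ≤ σ ^ 2 := by
    intro t ht
    obtain ⟨ht0, ht1⟩ := ht
    constructor
    · have hidp : Yc + t • S = ((1 + t) / 2) • Pm + ((1 - t) / 2) • Qm := by
        rw [hS, hYc]; module
      rw [hidp]
      calc frobNorm _ ≤ frobNorm (((1 + t) / 2) • Pm) + frobNorm (((1 - t) / 2) • Qm) :=
            frobNorm_add_le _ _
        _ ≤ ((1 + t) / 2) * σ ^ 2 + ((1 - t) / 2) * σ ^ 2 := by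
            rw [frobNorm_smul, frobNorm_smul,
              abs_of_nonneg (by linarith : (0:ℝ) ≤ (1 + t) / 2),
              abs_of_nonneg (by linarith : (0:ℝ) ≤ (1 - t) / 2)]
            exact add_le_add (mul_le_mul_of_nonneg_left hP (by linarith))
              (mul_le_mul_of_nonneg_left hQ (by linarith))
        _ = σ ^ 2 := by ring
    · have hidm : Yc - t • S = ((1 - t) / 2) • Pm + ((1 + t) / 2) • Qm := by
        rw [hS, hYc]; module
      rw [hidm]
      calc frobNorm _ ≤ frobNorm (((1 - t) / 2) • Pm) + frobNorm (((1 + t) / 2) • Qm) :=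
            frobNorm_add_le _ _
        _ ≤ ((1 - t) / 2) * σ ^ 2 + ((1 + t) / 2) * σ ^ 2 := by
            rw [frobNorm_smul, frobNorm_smul,
              abs_of_nonneg (by linarith : (0:ℝ) ≤ (1 - t) / 2),
              abs_of_nonneg (by linarith : (0:ℝ) ≤ (1 + t) / 2)]
            exact add_le_add (mul_le_mul_of_nonneg_left hP (by linarith))
              (mul_le_mul_of_nonneg_left hQ (by linarith))
        _ = σ ^ 2 := by ring
  have hYcB : frobNorm Yc ≤ σ ^ 2 := by
    have := (hmem 0 (by norm_num)).1
    simpa using this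
  -- second-order estimate
  have hkey := key_second_order grad hess hhess σ L0 hL0.le hhessLip Yc S hmem
  rw [hYpS, hYmS] at hkey
  -- first-order estimates
  have hgmid : frobNorm (grad (Uh * Uhᵀ) - grad Yc) ≤ L * (frobNorm D ^ 2 / 4) := by
    have h := hgradLip (Uh * Uhᵀ) Yc hXhat hYcB
    have e : Uh * Uhᵀ - Yc = (4:ℝ)⁻¹ • (D * Dᵀ) := by rw [hXY]; abel
    rw [e] at h
    calc frobNorm (grad (Uh * Uhᵀ) - grad Yc) ≤ L * frobNorm ((4:ℝ)⁻¹ • (D * Dᵀ)) := h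
      _ ≤ L * (frobNorm D ^ 2 / 4) := mul_le_mul_of_nonneg_left hEn hL.le
  have hgdiff : frobNorm (grad Pm - grad Qm) ≤ L * (2 * (σ * frobNorm D)) := by
    have h := hgradLip Pm Qm hP hQ
    have e : Pm - Qm = (2:ℝ) • S := by rw [← hYpS, ← hYmS]; module
    rw [e] at h
    have h2 : frobNorm ((2:ℝ) • S) ≤ 2 * (σ * frobNorm D) := by
      rw [frobNorm_smul]
      rw [abs_of_pos (by norm_num : (0:ℝ) < 2)]
      linarith
    calc frobNorm (grad Pm - grad Qm) ≤ L * frobNorm ((2:ℝ) • S) := h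
      _ ≤ L * (2 * (σ * frobNorm D)) := mul_le_mul_of_nonneg_left h2 hL.le
  -- bound on W
  have hW : frobNorm (grad (Uh * Uhᵀ) + grad (Uh * Uhᵀ) - grad Pm - grad Qm)
      ≤ L0 * (σ * frobNorm D) ^ 2 + 2 * (L * (frobNorm D ^ 2 / 4)) := by
    have hid : grad (Uh * Uhᵀ) + grad (Uh * Uhᵀ) - grad Pm - grad Qm
        = (grad (Uh * Uhᵀ) - grad Yc) + (grad (Uh * Uhᵀ) - grad Yc)
          - (grad Pm + grad Qm - grad Yc - grad Yc) := by abel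
    rw [hid]
    have hkey2 : frobNorm (grad Pm + grad Qm - grad Yc - grad Yc)
        ≤ L0 * (σ * frobNorm D) ^ 2 := by
      calc frobNorm (grad Pm + grad Qm - grad Yc - grad Yc) ≤ L0 * frobNorm S ^ 2 := hkey
        _ ≤ L0 * (σ * frobNorm D) ^ 2 := by
            apply mul_le_mul_of_nonneg_left _ hL0.le
            exact pow_le_pow_left₀ (frobNorm_nonneg _) hSn 2
    calc frobNorm _ ≤ frobNorm ((grad (Uh * Uhᵀ) - grad Yc) + (grad (Uh * Uhᵀ) - grad Yc))
          + frobNorm (grad Pm + grad Qm - grad Yc - grad Yc) := frobNorm_sub_le _ _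
      _ ≤ (frobNorm (grad (Uh * Uhᵀ) - grad Yc) + frobNorm (grad (Uh * Uhᵀ) - grad Yc))
          + frobNorm (grad Pm + grad Qm - grad Yc - grad Yc) := by
            have := frobNorm_add_le (grad (Uh * Uhᵀ) - grad Yc) (grad (Uh * Uhᵀ) - grad Yc)
            linarith
      _ ≤ L0 * (σ * frobNorm D) ^ 2 + 2 * (L * (frobNorm D ^ 2 / 4)) := by
            linarith [hgmid, hkey2]
  -- the algebraic identity
  have hsum : (∑ i, lamb i • (A i * Vb)) + (∑ i, lamb i • (A i * Ub))
      = (2:ℝ) • ∑ i, lamb i • (A i * Uh) := by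
    rw [Finset.smul_sum, ← Finset.sum_add_distrib]
    apply Finset.sum_congr rfl; intro i _
    rw [hUh, Matrix.mul_smul, Matrix.mul_add]
    module
  have hmulexp : ∀ M : Matrix (Fin n) (Fin n) ℝ,
      M * Uh = (2:ℝ)⁻¹ • (M * Ub) + (2:ℝ)⁻¹ • (M * Vb) := by
    intro M; rw [hUh, Matrix.mul_smul, Matrix.mul_add, smul_add]
  have hTid : (2:ℝ) • (grad (Uh * Uhᵀ) * Uh) + (2:ℝ) • ∑ i, lamb i • (A i * Uh)
      = (grad (Ub * Vbᵀ) * Vb + γ • (Ub - Vb) + ∑ i, lamb i • (A i * Vb))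
        + (grad (Vb * Ubᵀ) * Ub + γ • (Vb - Ub) + ∑ i, lamb i • (A i * Ub))
        + ((grad (Uh * Uhᵀ) + grad (Uh * Uhᵀ) - grad Pm - grad Qm) * Uh
          + (grad Pm - grad Qm) * ((2:ℝ)⁻¹ • D)) := by
    rw [← hsum, hPm, hQm, hDdef]
    simp only [Matrix.sub_mul, Matrix.add_mul, Matrix.mul_sub, Matrix.mul_smul, hmulexp]
    module
  -- final bound
  have hT1 : frobNorm ((2:ℝ) • (grad (Uh * Uhᵀ) * Uh) + (2:ℝ) • ∑ i, lamb i • (A i * Uh))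
      ≤ ε + ε + (frobNorm ((grad (Uh * Uhᵀ) + grad (Uh * Uhᵀ) - grad Pm - grad Qm) * Uh)
        + frobNorm ((grad Pm - grad Qm) * ((2:ℝ)⁻¹ • D))) := by
    rw [hTid]
    calc frobNorm _ ≤ frobNorm ((grad (Ub * Vbᵀ) * Vb + γ • (Ub - Vb) + ∑ i, lamb i • (A i * Vb))
            + (grad (Vb * Ubᵀ) * Ub + γ • (Vb - Ub) + ∑ i, lamb i • (A i * Ub)))
          + frobNorm ((grad (Uh * Uhᵀ) + grad (Uh * Uhᵀ) - grad Pm - grad Qm) * Uh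
            + (grad Pm - grad Qm) * ((2:ℝ)⁻¹ • D)) := frobNorm_add_le _ _
      _ ≤ (frobNorm (grad (Ub * Vbᵀ) * Vb + γ • (Ub - Vb) + ∑ i, lamb i • (A i * Vb))
            + frobNorm (grad (Vb * Ubᵀ) * Ub + γ • (Vb - Ub) + ∑ i, lamb i • (A i * Ub)))
          + (frobNorm ((grad (Uh * Uhᵀ) + grad (Uh * Uhᵀ) - grad Pm - grad Qm) * Uh)
            + frobNorm ((grad Pm - grad Qm) * ((2:ℝ)⁻¹ • D))) := by
            have := frobNorm_add_le (grad (Ub * Vbᵀ) * Vb + γ • (Ub - Vb)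
              + ∑ i, lamb i • (A i * Vb))
              (grad (Vb * Ubᵀ) * Ub + γ • (Vb - Ub) + ∑ i, lamb i • (A i * Ub))
            have := frobNorm_add_le ((grad (Uh * Uhᵀ) + grad (Uh * Uhᵀ) - grad Pm - grad Qm) * Uh)
              ((grad Pm - grad Qm) * ((2:ℝ)⁻¹ • D))
            linarith
      _ ≤ ε + ε + (frobNorm ((grad (Uh * Uhᵀ) + grad (Uh * Uhᵀ) - grad Pm - grad Qm) * Uh)
            + frobNorm ((grad Pm - grad Qm) * ((2:ℝ)⁻¹ • D))) := by
            linarith [hK1, hK2]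
  have hWU : frobNorm ((grad (Uh * Uhᵀ) + grad (Uh * Uhᵀ) - grad Pm - grad Qm) * Uh)
      ≤ (L0 * (σ * frobNorm D) ^ 2 + 2 * (L * (frobNorm D ^ 2 / 4))) * σ := by
    calc frobNorm _ ≤ frobNorm (grad (Uh * Uhᵀ) + grad (Uh * Uhᵀ) - grad Pm - grad Qm)
          * frobNorm Uh := frobNorm_mul_le _ _
      _ ≤ (L0 * (σ * frobNorm D) ^ 2 + 2 * (L * (frobNorm D ^ 2 / 4))) * σ :=
          mul_le_mul hW hUhn (frobNorm_nonneg _)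
            (by positivity)
  have hgD : frobNorm ((grad Pm - grad Qm) * ((2:ℝ)⁻¹ • D))
      ≤ L * (2 * (σ * frobNorm D)) * ((2:ℝ)⁻¹ * frobNorm D) := by
    calc frobNorm _ ≤ frobNorm (grad Pm - grad Qm) * frobNorm ((2:ℝ)⁻¹ • D) :=
          frobNorm_mul_le _ _
      _ ≤ L * (2 * (σ * frobNorm D)) * ((2:ℝ)⁻¹ * frobNorm D) := by
          rw [frobNorm_smul, abs_of_pos (by norm_num : (0:ℝ) < (2:ℝ)⁻¹)]
          exact mul_le_mul hgdiff le_rfl (mul_nonneg (by norm_num) (frobNorm_nonneg _))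
            (mul_nonneg hL.le (mul_nonneg (by norm_num) (mul_nonneg hσ.le (frobNorm_nonneg _))))
  -- put it together
  have hDsq : frobNorm D ^ 2 ≤ (dl / γ) ^ 2 :=
    pow_le_pow_left₀ (frobNorm_nonneg _) hDdl 2
  have hcoef : (L0 * σ ^ 3 + 3 / 2 * L * σ) * frobNorm D ^ 2
      ≤ (2 * L0 * σ ^ 3 + 3 * L * σ) * dl ^ 2 / (2 * γ ^ 2) := by
    have h1 : (L0 * σ ^ 3 + 3 / 2 * L * σ) * frobNorm D ^ 2
        ≤ (L0 * σ ^ 3 + 3 / 2 * L * σ) * (dl / γ) ^ 2 :=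
      mul_le_mul_of_nonneg_left hDsq (by positivity)
    have h2 : (L0 * σ ^ 3 + 3 / 2 * L * σ) * (dl / γ) ^ 2
        = (2 * L0 * σ ^ 3 + 3 * L * σ) * dl ^ 2 / (2 * γ ^ 2) := by
      field_simp
    linarith
  calc frobNorm ((2:ℝ) • (grad (Uh * Uhᵀ) * Uh) + (2:ℝ) • ∑ i, lamb i • (A i * Uh))
      ≤ ε + ε + ((L0 * (σ * frobNorm D) ^ 2 + 2 * (L * (frobNorm D ^ 2 / 4))) * σ
        + L * (2 * (σ * frobNorm D)) * ((2:ℝ)⁻¹ * frobNorm D)) := by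
        linarith [hT1, hWU, hgD]
    _ = 2 * ε + (L0 * σ ^ 3 + 3 / 2 * L * σ) * frobNorm D ^ 2 := by ring
    _ ≤ 2 * ε + (2 * L0 * σ ^ 3 + 3 * L * σ)
        * (ε + Lf * σ + Real.sqrt (sA A) * σ ^ 2) ^ 2 / (2 * γ ^ 2) := by
        rw [← hdl]; linarith [hcoef]
end
end

section
/- Combined gradient symmetrization bound (intermediate estimate in the proof of Theorem 2.1): For all U, V ∈ ℝ^{n×r} with ‖U‖_F ≤ σ and ‖V‖_F ≤ σ, setting Û = (U + V)/2, it holds that ‖∇f(UVᵀ)V + ∇f(VUᵀ)U − 2∇f(ÛÛᵀ)Û‖_F ≤ (L_0 σ³ + (3/2)Lσ)‖U − V‖_F². -/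
open Matrix
open scoped BigOperators

noncomputable section

lemma frobNorm_sq {α β : Type*} [Fintype α] [Fintype β] (X : Matrix α β ℝ) :
    frobNorm X ^ 2 = ∑ i, ∑ j, (X i j) ^ 2 :=
  Real.sq_sqrt (Finset.sum_nonneg fun _ _ => Finset.sum_nonneg fun _ _ => sq_nonneg _)

lemma key_ineq {n r : Type*} [Fintype n] [Fintype r] (a c : Matrix n r ℝ) :
    frobNorm (a * aᵀ + (c * aᵀ - a * cᵀ)) ≤ frobNorm a ^ 2 + frobNorm c ^ 2 := by
  classical
  set N : n → ℝ := fun i => ∑ k, (a i k ^ 2 + c i k ^ 2) with hN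
  have hNnn : ∀ i, 0 ≤ N i := fun i =>
    Finset.sum_nonneg fun _ _ => add_nonneg (sq_nonneg _) (sq_nonneg _)
  set S : Matrix n n ℝ := a * aᵀ with hS
  set C : Matrix n n ℝ := c * cᵀ with hC
  set W : Matrix n n ℝ := c * aᵀ - a * cᵀ with hW
  have hSe : ∀ i j, S i j = ∑ k, a i k * a j k := by
    intro i j; simp [hS, Matrix.mul_apply]
  have hCe : ∀ i j, C i j = ∑ k, c i k * c j k := by
    intro i j; simp [hC, Matrix.mul_apply]
  have hWe : ∀ i j, W i j = ∑ k, (c i k * a j k - a i k * c j k) := by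
    intro i j; simp [hW, Matrix.mul_apply, Finset.sum_sub_distrib]
  -- pointwise complex Cauchy-Schwarz
  have h1 : ∀ i j, (S i j + C i j) ^ 2 + (W i j) ^ 2 ≤ N i * N j := by
    intro i j
    set s : ℝ := S i j + C i j with hs
    set w : ℝ := W i j with hw
    have hs' : s = ∑ k, (a i k * a j k + c i k * c j k) := by
      rw [hs, hSe, hCe, Finset.sum_add_distrib]
    have hw' : w = ∑ k, (c i k * a j k - a i k * c j k) := hWe i j
    set f : r × Bool → ℝ := fun p => if p.2 then a i p.1 else c i p.1 with hf
    set g : r × Bool → ℝ :=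
      fun p => if p.2 then s * a j p.1 - w * c j p.1 else s * c j p.1 + w * a j p.1 with hg
    have h0 : ∑ p : r × Bool, f p * g p = s ^ 2 + w ^ 2 := by
      rw [Fintype.sum_prod_type]
      have e : ∀ k : r, ∑ b : Bool, f (k, b) * g (k, b)
          = s * (a i k * a j k + c i k * c j k) + w * (c i k * a j k - a i k * c j k) := by
        intro k
        simp only [hf, hg, Fintype.sum_bool]
        norm_num
        ring
      rw [Finset.sum_congr rfl fun k _ => e k]
      rw [Finset.sum_add_distrib, ← Finset.mul_sum, ← Finset.mul_sum, ← hs', ← hw']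
      ring
    have hsf : ∑ p : r × Bool, f p ^ 2 = N i := by
      rw [Fintype.sum_prod_type]
      refine Finset.sum_congr rfl fun k _ => ?_
      simp only [hf, Fintype.sum_bool]
      norm_num
    have hsg : ∑ p : r × Bool, g p ^ 2 = (s ^ 2 + w ^ 2) * N j := by
      rw [Fintype.sum_prod_type]
      have e : ∀ k : r, ∑ b : Bool, g (k, b) ^ 2
          = (s ^ 2 + w ^ 2) * (a j k ^ 2 + c j k ^ 2) := by
        intro k
        simp only [hg, Fintype.sum_bool]
        norm_num
        ring
      rw [Finset.sum_congr rfl fun k _ => e k, ← Finset.mul_sum]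
    have hcs := Finset.sum_mul_sq_le_sq_mul_sq Finset.univ f g
    rw [h0, hsf, hsg] at hcs
    rcases eq_or_lt_of_le (by positivity : (0:ℝ) ≤ s ^ 2 + w ^ 2) with hq | hq
    · rw [← hq]; exact mul_nonneg (hNnn i) (hNnn j)
    · nlinarith [hNnn i, hNnn j]
  -- symmetric × skew cross term vanishes
  have hSsym : ∀ i j, S j i = S i j := by
    intro i j; rw [hSe, hSe]
    exact Finset.sum_congr rfl fun k _ => mul_comm _ _
  have hCsym : ∀ i j, C j i = C i j := by
    intro i j; rw [hCe, hCe]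
    exact Finset.sum_congr rfl fun k _ => mul_comm _ _
  have hWskew : ∀ i j, W j i = -(W i j) := by
    intro i j; rw [hWe, hWe, ← Finset.sum_neg_distrib]
    exact Finset.sum_congr rfl fun k _ => by ring
  have hSW : ∑ i, ∑ j, S i j * W i j = 0 := by
    have h2 : ∑ i, ∑ j, S i j * W i j = -∑ i, ∑ j, S i j * W i j := by
      nth_rewrite 1 [Finset.sum_comm]
      rw [← Finset.sum_neg_distrib]
      refine Finset.sum_congr rfl fun i _ => ?_
      rw [← Finset.sum_neg_distrib]
      refine Finset.sum_congr rfl fun j _ => ?_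
      rw [hSsym, hWskew]; ring
    linarith
  -- symmetric × symmetric cross term is nonnegative
  have hSC : 0 ≤ ∑ i, ∑ j, S i j * C i j := by
    have e1 : ∑ i, ∑ j, S i j * C i j = trace (S * C) := by
      have ht : trace (S * C) = ∑ i, ∑ j, S i j * C j i := by
        simp [Matrix.trace, Matrix.diag, Matrix.mul_apply]
      rw [ht]
      exact Finset.sum_congr rfl fun i _ => Finset.sum_congr rfl fun j _ => by rw [hCsym]
    have e2 : trace (S * C) = trace ((aᵀ * c)ᵀ * (aᵀ * c)) := by
      rw [hS, hC, Matrix.transpose_mul, Matrix.transpose_transpose]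
      rw [show a * aᵀ * (c * cᵀ) = a * (aᵀ * c) * cᵀ from by
        rw [Matrix.mul_assoc, Matrix.mul_assoc, Matrix.mul_assoc]]
      rw [Matrix.trace_mul_comm, ← Matrix.mul_assoc]
    have e3 : ∀ (M : Matrix r r ℝ), 0 ≤ trace (Mᵀ * M) := by
      intro M
      have ht : trace (Mᵀ * M) = ∑ k, ∑ l, (M l k) ^ 2 := by
        simp [Matrix.trace, Matrix.diag, Matrix.mul_apply, sq]
      rw [ht]
      exact Finset.sum_nonneg fun _ _ => Finset.sum_nonneg fun _ _ => sq_nonneg _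
    rw [e1, e2]; exact e3 _
  -- combine
  have hCsq : 0 ≤ ∑ i, ∑ j, (C i j) ^ 2 :=
    Finset.sum_nonneg fun _ _ => Finset.sum_nonneg fun _ _ => sq_nonneg _
  have main : frobNorm (S + W) ^ 2 ≤ (∑ i, N i) ^ 2 := by
    rw [frobNorm_sq]
    have expand : ∀ i j, ((S + W) i j) ^ 2
        = (S i j + C i j) ^ 2 + (W i j) ^ 2 - 2 * (S i j * C i j) - (C i j) ^ 2
          + 2 * (S i j * W i j) := by
      intro i j; simp only [Matrix.add_apply]; ring
    calc ∑ i, ∑ j, ((S + W) i j) ^ 2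
        = (∑ i, ∑ j, ((S i j + C i j) ^ 2 + (W i j) ^ 2))
          - 2 * (∑ i, ∑ j, S i j * C i j) - (∑ i, ∑ j, (C i j) ^ 2)
          + 2 * (∑ i, ∑ j, S i j * W i j) := by
          simp only [expand, Finset.sum_add_distrib, Finset.sum_sub_distrib,
            Finset.mul_sum]
      _ ≤ ∑ i, ∑ j, ((S i j + C i j) ^ 2 + (W i j) ^ 2) := by
          rw [hSW]; linarith
      _ ≤ ∑ i, ∑ j, N i * N j := by
          exact Finset.sum_le_sum fun i _ => Finset.sum_le_sum fun j _ => h1 i j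
      _ = (∑ i, N i) ^ 2 := by
          rw [sq, Finset.sum_mul_sum]
  have hNs : ∑ i, N i = frobNorm a ^ 2 + frobNorm c ^ 2 := by
    rw [frobNorm_sq, frobNorm_sq, ← Finset.sum_add_distrib]
    exact Finset.sum_congr rfl fun i _ => Finset.sum_add_distrib
  have hfin : frobNorm (S + W) ≤ ∑ i, N i := by
    have hn := Finset.sum_nonneg fun i (_ : i ∈ Finset.univ) => hNnn i
    nlinarith [frobNorm_nonneg (S + W)]
  rw [hNs] at hfin
  exact hfin

section Aux

attribute [local instance] Matrix.frobeniusSeminormedAddCommGroup Matrix.frobeniusNormedSpace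

lemma frobNorm_eq_norm_s7 {a b : Type*} [Fintype a] [Fintype b] (M : Matrix a b ℝ) :
    frobNorm M = ‖M‖ := by
  rw [frobNorm, Matrix.frobenius_norm_def, ← Real.sqrt_eq_rpow]
  congr 1
  refine Finset.sum_congr rfl fun i _ => Finset.sum_congr rfl fun j _ => ?_
  rw [Real.rpow_two, Real.norm_eq_abs, sq_abs]

lemma frobNorm_add_le_s7 {a b : Type*} [Fintype a] [Fintype b] (M N : Matrix a b ℝ) :
    frobNorm (M + N) ≤ frobNorm M + frobNorm N := by
  simp only [frobNorm_eq_norm_s7]; exact norm_add_le _ _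

lemma frobNorm_smul_s7 {a b : Type*} [Fintype a] [Fintype b] (s : ℝ) (M : Matrix a b ℝ) :
    frobNorm (s • M) = |s| * frobNorm M := by
  simp only [frobNorm_eq_norm_s7]
  rw [norm_smul, Real.norm_eq_abs]

lemma frobNorm_neg {a b : Type*} [Fintype a] [Fintype b] (M : Matrix a b ℝ) :
    frobNorm (-M) = frobNorm M := by
  simp only [frobNorm_eq_norm_s7]; exact norm_neg _

lemma frobNorm_sub_le_s7 {a b : Type*} [Fintype a] [Fintype b] (M N : Matrix a b ℝ) :
    frobNorm (M - N) ≤ frobNorm M + frobNorm N := by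
  rw [sub_eq_add_neg]
  exact (frobNorm_add_le_s7 _ _).trans (by rw [frobNorm_neg])

lemma frobNorm_mul_le_s7 {a b c : Type*} [Fintype a] [Fintype b] [Fintype c]
    (M : Matrix a b ℝ) (N : Matrix b c ℝ) :
    frobNorm (M * N) ≤ frobNorm M * frobNorm N := by
  simp only [frobNorm_eq_norm_s7]; exact Matrix.frobenius_norm_mul M N

lemma frobNorm_transpose_s7 {a b : Type*} [Fintype a] [Fintype b] (M : Matrix a b ℝ) :
    frobNorm Mᵀ = frobNorm M := by
  simp only [frobNorm_eq_norm_s7]; exact Matrix.frobenius_norm_transpose M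

end Aux

/-- matrix to Euclidean space -/
def mat2euc {n : ℕ} (M : Matrix (Fin n) (Fin n) ℝ) : EuclideanSpace ℝ (Fin n × Fin n) :=
  (WithLp.equiv 2 _).symm (fun p => M p.1 p.2)

lemma mat2euc_norm {n : ℕ} (M : Matrix (Fin n) (Fin n) ℝ) : ‖mat2euc M‖ = frobNorm M := by
  rw [mat2euc, EuclideanSpace.norm_eq, frobNorm]
  congr 1
  rw [Fintype.sum_prod_type]
  refine Finset.sum_congr rfl fun i _ => Finset.sum_congr rfl fun j _ => ?_
  show ‖M i j‖ ^ 2 = M i j ^ 2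
  rw [Real.norm_eq_abs, sq_abs]

lemma mat2euc_hasDerivAt {n : ℕ} {f : ℝ → Matrix (Fin n) (Fin n) ℝ}
    {f' : Matrix (Fin n) (Fin n) ℝ} {t : ℝ}
    (h : ∀ i j, HasDerivAt (fun s => f s i j) (f' i j) t) :
    HasDerivAt (fun s => mat2euc (f s)) (mat2euc f') t := by
  have hpi : HasDerivAt (fun s => (fun p : Fin n × Fin n => f s p.1 p.2))
      (fun p : Fin n × Fin n => f' p.1 p.2) t :=
    hasDerivAt_pi.2 fun p => h p.1 p.2
  have := ((PiLp.continuousLinearEquiv 2 ℝ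
      (fun _ : Fin n × Fin n => ℝ)).symm.toContinuousLinearMap.hasFDerivAt).comp_hasDerivAt t hpi
  exact this

/-- Second-order symmetric difference bound. -/
lemma secdiff {n : ℕ}
    (grad : Matrix (Fin n) (Fin n) ℝ → Matrix (Fin n) (Fin n) ℝ)
    (hess : Matrix (Fin n) (Fin n) ℝ → Matrix (Fin n) (Fin n) ℝ → Matrix (Fin n) (Fin n) ℝ)
    (hhess : ∀ X H : Matrix (Fin n) (Fin n) ℝ, ∀ i j,
      HasDerivAt (fun t : ℝ => grad (X + t • H) i j) (hess X H i j) 0)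
    (σ L0 : ℝ) (hL0 : 0 < L0)
    (hhessLip : ∀ X Y H : Matrix (Fin n) (Fin n) ℝ, frobNorm X ≤ σ ^ 2 → frobNorm Y ≤ σ ^ 2 →
      frobNorm (hess X H - hess Y H) ≤ L0 * frobNorm H * frobNorm (X - Y))
    (X Δ : Matrix (Fin n) (Fin n) ℝ)
    (hp : frobNorm (X + Δ) ≤ σ ^ 2) (hm : frobNorm (X - Δ) ≤ σ ^ 2) :
    frobNorm (grad (X + Δ) + grad (X - Δ) - (2 : ℝ) • grad X) ≤ L0 * frobNorm Δ ^ 2 := by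
  -- general derivative along a line
  have hD : ∀ (Y H : Matrix (Fin n) (Fin n) ℝ) (t₀ : ℝ) (i j : Fin n),
      HasDerivAt (fun t : ℝ => grad (Y + t • H) i j) (hess (Y + t₀ • H) H i j) t₀ := by
    intro Y H t₀ i j
    have h := hhess (Y + t₀ • H) H i j
    have hid : HasDerivAt (fun t : ℝ => t - t₀) 1 t₀ := (hasDerivAt_id t₀).sub_const t₀
    have hc := HasDerivAt.scomp_of_eq (x := t₀) (y := 0) h hid (sub_self t₀).symm
    have hfun : ((fun s => grad (Y + t₀ • H + s • H) i j) ∘ (fun t : ℝ => t - t₀))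
        = fun t : ℝ => grad (Y + t • H) i j := by
      funext t
      simp only [Function.comp]
      congr 1
      rw [sub_smul]
      abel
    rw [hfun, one_smul] at hc
    exact hc
  -- hess is odd in the direction
  have hneg : ∀ (Y H : Matrix (Fin n) (Fin n) ℝ) (i j : Fin n),
      hess Y (-H) i j = -(hess Y H i j) := by
    intro Y H i j
    have h1 := hhess Y (-H) i j
    have hnid : HasDerivAt (fun t : ℝ => -t) (-1) (0 : ℝ) := (hasDerivAt_id (0:ℝ)).neg
    have h2 := hhess Y H i j
    have hc := HasDerivAt.scomp_of_eq (x := (0:ℝ)) (y := (0:ℝ)) h2 hnid (by norm_num)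
    have hfun : ((fun s => grad (Y + s • H) i j) ∘ (fun t : ℝ => -t))
        = fun t : ℝ => grad (Y + t • (-H)) i j := by
      funext t
      simp only [Function.comp]
      congr 2
      rw [smul_neg, neg_smul]
    rw [hfun] at hc
    have := h1.unique hc
    rw [this, smul_eq_mul]; ring
  -- ball membership along the segment
  have hball : ∀ t : ℝ, t ∈ Set.Icc (0:ℝ) 1 →
      frobNorm (X + t • Δ) ≤ σ ^ 2 ∧ frobNorm (X - t • Δ) ≤ σ ^ 2 := by
    intro t ht
    obtain ⟨ht0, ht1⟩ := ht
    constructor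
    · have hid : X + t • Δ = ((1+t)/2) • (X + Δ) + ((1-t)/2) • (X - Δ) := by
        match_scalars <;> ring
      rw [hid]
      calc frobNorm (((1+t)/2) • (X + Δ) + ((1-t)/2) • (X - Δ))
          ≤ |(1+t)/2| * frobNorm (X + Δ) + |(1-t)/2| * frobNorm (X - Δ) := by
            refine (frobNorm_add_le_s7 _ _).trans ?_
            rw [frobNorm_smul_s7, frobNorm_smul_s7]
        _ ≤ ((1+t)/2) * σ^2 + ((1-t)/2) * σ^2 := by
            rw [abs_of_nonneg (by linarith), abs_of_nonneg (by linarith)]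
            have h1 : (0:ℝ) ≤ (1+t)/2 := by linarith
            have h2 : (0:ℝ) ≤ (1-t)/2 := by linarith
            exact add_le_add (mul_le_mul_of_nonneg_left hp h1)
              (mul_le_mul_of_nonneg_left hm h2)
        _ = σ^2 := by ring
    · have hid : X - t • Δ = ((1-t)/2) • (X + Δ) + ((1+t)/2) • (X - Δ) := by
        match_scalars <;> ring
      rw [hid]
      calc frobNorm (((1-t)/2) • (X + Δ) + ((1+t)/2) • (X - Δ))
          ≤ |(1-t)/2| * frobNorm (X + Δ) + |(1+t)/2| * frobNorm (X - Δ) := by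
            refine (frobNorm_add_le_s7 _ _).trans ?_
            rw [frobNorm_smul_s7, frobNorm_smul_s7]
        _ ≤ ((1-t)/2) * σ^2 + ((1+t)/2) * σ^2 := by
            rw [abs_of_nonneg (by linarith), abs_of_nonneg (by linarith)]
            exact add_le_add (mul_le_mul_of_nonneg_left hp (by linarith))
              (mul_le_mul_of_nonneg_left hm (by linarith))
        _ = σ^2 := by ring
  -- the path and its derivative
  set F : ℝ → Matrix (Fin n) (Fin n) ℝ :=
    fun t => grad (X + t • Δ) + grad (X - t • Δ) - (2:ℝ) • grad X with hF
  set F' : ℝ → Matrix (Fin n) (Fin n) ℝ :=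
    fun t => hess (X + t • Δ) Δ + hess (X - t • Δ) (-Δ) with hF'
  have hXm : ∀ t : ℝ, X + t • (-Δ) = X - t • Δ := by
    intro t; rw [smul_neg, ← sub_eq_add_neg]
  have hFder : ∀ t : ℝ, HasDerivAt (fun s => mat2euc (F s)) (mat2euc (F' t)) t := by
    intro t
    refine mat2euc_hasDerivAt fun i j => ?_
    have h1 := hD X Δ t i j
    have h2 := hD X (-Δ) t i j
    simp only [hXm] at h2
    have h3 := (h1.add h2).sub_const ((2:ℝ) • grad X i j)
    have : (fun s => F s i j)
        = fun s => grad (X + s • Δ) i j + grad (X - s • Δ) i j - (2:ℝ) • grad X i j := by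
      funext s
      simp [hF, Matrix.sub_apply, Matrix.add_apply]
    rw [this]
    have : F' t i j = hess (X + t • Δ) Δ i j + hess (X - t • Δ) (-Δ) i j := by
      simp [hF', Matrix.add_apply]
    rw [this]
    exact h3
  -- bound on the derivative
  have hbound : ∀ t ∈ Set.Ico (0:ℝ) 1, ‖mat2euc (F' t)‖ ≤ (L0 * frobNorm Δ ^ 2) * (2 * t) := by
    intro t ht
    obtain ⟨ht0, ht1⟩ := ht
    obtain ⟨hb1, hb2⟩ := hball t ⟨ht0, le_of_lt ht1⟩
    have hXball : frobNorm X ≤ σ ^ 2 := by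
      have := (hball 0 ⟨le_refl _, zero_le_one⟩).1
      simpa using this
    rw [mat2euc_norm]
    have hzero : hess X Δ + hess X (-Δ) = 0 := by
      funext i j
      simp only [Matrix.add_apply, hneg, Matrix.zero_apply]
      ring
    have hsplit : F' t = (hess (X + t • Δ) Δ - hess X Δ)
        + (hess (X - t • Δ) (-Δ) - hess X (-Δ)) + (hess X Δ + hess X (-Δ)) := by
      simp only [hF']
      abel
    have e1 : frobNorm (hess (X + t • Δ) Δ - hess X Δ) ≤ L0 * frobNorm Δ * (t * frobNorm Δ) := by
      have := hhessLip (X + t • Δ) X Δ hb1 hXball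
      have hd : X + t • Δ - X = t • Δ := by abel
      rw [hd, frobNorm_smul_s7, abs_of_nonneg ht0] at this
      exact this
    have e2 : frobNorm (hess (X - t • Δ) (-Δ) - hess X (-Δ))
        ≤ L0 * frobNorm Δ * (t * frobNorm Δ) := by
      have := hhessLip (X - t • Δ) X (-Δ) hb2 hXball
      have hd : X - t • Δ - X = -(t • Δ) := by abel
      rw [hd, frobNorm_neg, frobNorm_neg, frobNorm_smul_s7, abs_of_nonneg ht0] at this
      exact this
    calc frobNorm (F' t)
        ≤ frobNorm ((hess (X + t • Δ) Δ - hess X Δ)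
            + (hess (X - t • Δ) (-Δ) - hess X (-Δ))) + frobNorm (hess X Δ + hess X (-Δ)) := by
          rw [hsplit]; exact frobNorm_add_le_s7 _ _
      _ ≤ frobNorm (hess (X + t • Δ) Δ - hess X Δ)
            + frobNorm (hess (X - t • Δ) (-Δ) - hess X (-Δ)) + 0 := by
          rw [hzero]
          have : frobNorm (0 : Matrix (Fin n) (Fin n) ℝ) = 0 := by
            simp [frobNorm]
          rw [this]
          exact add_le_add (frobNorm_add_le_s7 _ _) le_rfl
      _ ≤ L0 * frobNorm Δ * (t * frobNorm Δ) + L0 * frobNorm Δ * (t * frobNorm Δ) + 0 :=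
          add_le_add (add_le_add e1 e2) le_rfl
      _ = (L0 * frobNorm Δ ^ 2) * (2 * t) := by ring
  -- MVT with quadratic boundary
  have hB : ∀ t : ℝ, HasDerivAt (fun t : ℝ => (L0 * frobNorm Δ ^ 2) * t ^ 2)
      ((L0 * frobNorm Δ ^ 2) * (2 * t)) t := by
    intro t
    have := (hasDerivAt_pow 2 t).const_mul (L0 * frobNorm Δ ^ 2)
    simpa using this
  have hcont : ContinuousOn (fun s => mat2euc (F s)) (Set.Icc 0 1) :=
    fun t _ => ((hFder t).continuousAt).continuousWithinAt
  have h0 : ‖mat2euc (F 0)‖ ≤ (L0 * frobNorm Δ ^ 2) * 0 ^ 2 := by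
    have : F 0 = 0 := by
      simp only [hF, zero_smul, add_zero, sub_zero, two_smul]
      abel
    rw [this]
    simp [mat2euc_norm, frobNorm]
  have key := image_norm_le_of_norm_deriv_right_le_deriv_boundary
    hcont (fun t ht => (hFder t).hasDerivWithinAt) h0 hB hbound
  have := key (Set.right_mem_Icc.2 zero_le_one)
  rw [mat2euc_norm] at this
  have hF1 : F 1 = grad (X + Δ) + grad (X - Δ) - (2:ℝ) • grad X := by
    simp [hF]
  rw [hF1] at this
  calc frobNorm (grad (X + Δ) + grad (X - Δ) - (2:ℝ) • grad X)
      ≤ (L0 * frobNorm Δ ^ 2) * 1 ^ 2 := this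
    _ = L0 * frobNorm Δ ^ 2 := by ring


set_option maxHeartbeats 2000000 in
/-- intermediate estimate in the proof of Theorem 2.1:
combined gradient symmetrization bound. -/
theorem combined_gradient_symmetrization_bound
    (n r : ℕ) (hn : 0 < n) (hr : 0 < r)
    (f : Matrix (Fin n) (Fin n) ℝ → ℝ)
    (grad : Matrix (Fin n) (Fin n) ℝ → Matrix (Fin n) (Fin n) ℝ)
    (hgrad : ∀ X H : Matrix (Fin n) (Fin n) ℝ,
      HasDerivAt (fun t : ℝ => f (X + t • H)) (frobInner (grad X) H) 0)
    (hgradCont : Continuous grad)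
    (hess : Matrix (Fin n) (Fin n) ℝ → Matrix (Fin n) (Fin n) ℝ → Matrix (Fin n) (Fin n) ℝ)
    (hhess : ∀ X H : Matrix (Fin n) (Fin n) ℝ, ∀ i j,
      HasDerivAt (fun t : ℝ => grad (X + t • H) i j) (hess X H i j) 0)
    (hhessCont : ∀ H : Matrix (Fin n) (Fin n) ℝ, Continuous (fun X => hess X H))
    (σ L L0 : ℝ) (hσ : 0 < σ) (hL : 0 < L) (hL0 : 0 < L0)
    (hgradLip : ∀ X Y : Matrix (Fin n) (Fin n) ℝ, frobNorm X ≤ σ ^ 2 → frobNorm Y ≤ σ ^ 2 →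
      frobNorm (grad X - grad Y) ≤ L * frobNorm (X - Y))
    (hhessLip : ∀ X Y H : Matrix (Fin n) (Fin n) ℝ, frobNorm X ≤ σ ^ 2 → frobNorm Y ≤ σ ^ 2 →
      frobNorm (hess X H - hess Y H) ≤ L0 * frobNorm H * frobNorm (X - Y))
    (U V : Matrix (Fin n) (Fin r) ℝ) (hU : frobNorm U ≤ σ) (hV : frobNorm V ≤ σ)
    (Uh : Matrix (Fin n) (Fin r) ℝ) (hUh : Uh = (2 : ℝ)⁻¹ • (U + V)) :
    frobNorm (grad (U * Vᵀ) * V + grad (V * Uᵀ) * U - (2 : ℝ) • (grad (Uh * Uhᵀ) * Uh))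
      ≤ (L0 * σ ^ 3 + 3 / 2 * L * σ) * (frobNorm (U - V)) ^ 2 := by
  classical
  set c : Matrix (Fin n) (Fin r) ℝ := (2 : ℝ)⁻¹ • (U - V) with hc
  set d : ℝ := frobNorm (U - V) with hd
  have hd0 : 0 ≤ d := frobNorm_nonneg _
  have hcn : frobNorm c = 2⁻¹ * d := by
    rw [hc, frobNorm_smul_s7]
    norm_num
    exact hd.symm
  have hU' : U = Uh + c := by
    rw [hUh, hc]; match_scalars <;> ring
  have hV' : V = Uh - c := by
    rw [hUh, hc]; match_scalars <;> ring
  have han : frobNorm Uh ≤ σ := by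
    rw [hUh]
    calc frobNorm ((2:ℝ)⁻¹ • (U + V)) = 2⁻¹ * frobNorm (U + V) := by
          rw [frobNorm_smul_s7]; norm_num
      _ ≤ 2⁻¹ * (frobNorm U + frobNorm V) := by
          have := frobNorm_add_le_s7 U V
          linarith
      _ ≤ σ := by linarith
  -- parallelogram-type bound
  have hac : frobNorm Uh ^ 2 + frobNorm c ^ 2 ≤ σ ^ 2 := by
    have hUn : 0 ≤ frobNorm U := frobNorm_nonneg U
    have hVn : 0 ≤ frobNorm V := frobNorm_nonneg V
    have key : (∑ i, ∑ j, (Uh i j ^ 2 + c i j ^ 2)) * 2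
        = ∑ i, ∑ j, (U i j ^ 2 + V i j ^ 2) := by
      rw [Finset.sum_mul]
      refine Finset.sum_congr rfl fun i _ => ?_
      rw [Finset.sum_mul]
      refine Finset.sum_congr rfl fun j _ => ?_
      rw [hUh, hc]
      simp only [Matrix.smul_apply, Matrix.add_apply, Matrix.sub_apply, smul_eq_mul]
      ring
    have hA : frobNorm Uh ^ 2 + frobNorm c ^ 2 = ∑ i, ∑ j, (Uh i j ^ 2 + c i j ^ 2) := by
      rw [frobNorm_sq, frobNorm_sq, ← Finset.sum_add_distrib]
      exact Finset.sum_congr rfl fun i _ => Finset.sum_add_distrib.symm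
    have hB : frobNorm U ^ 2 + frobNorm V ^ 2 = ∑ i, ∑ j, (U i j ^ 2 + V i j ^ 2) := by
      rw [frobNorm_sq, frobNorm_sq, ← Finset.sum_add_distrib]
      exact Finset.sum_congr rfl fun i _ => Finset.sum_add_distrib.symm
    have h2 : frobNorm U ^ 2 ≤ σ ^ 2 := by nlinarith
    have h3 : frobNorm V ^ 2 ≤ σ ^ 2 := by nlinarith
    linarith
  set X : Matrix (Fin n) (Fin n) ℝ := Uh * Uhᵀ with hX
  set Δ : Matrix (Fin n) (Fin n) ℝ := c * Uhᵀ - Uh * cᵀ with hΔ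
  have hXp : frobNorm (X + Δ) ≤ σ ^ 2 := (key_ineq Uh c).trans hac
  have hXm : frobNorm (X - Δ) ≤ σ ^ 2 := by
    have h := key_ineq Uh (-c)
    have he : Uh * Uhᵀ + (-c * Uhᵀ - Uh * (-c)ᵀ) = X - Δ := by
      rw [Matrix.transpose_neg, Matrix.neg_mul, Matrix.mul_neg, hX, hΔ]
      abel
    rw [he, frobNorm_neg] at h
    exact h.trans hac
  have hUV : U * Vᵀ = X + Δ - c * cᵀ := by
    rw [hU', hV', Matrix.transpose_sub, Matrix.add_mul, Matrix.mul_sub, Matrix.mul_sub,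
      hX, hΔ]
    abel
  have hVU : V * Uᵀ = X - Δ - c * cᵀ := by
    rw [hU', hV', Matrix.transpose_add, Matrix.sub_mul, Matrix.mul_add, Matrix.mul_add,
      hX, hΔ]
    abel
  have hUVball : frobNorm (U * Vᵀ) ≤ σ ^ 2 := by
    calc frobNorm (U * Vᵀ) ≤ frobNorm U * frobNorm Vᵀ := frobNorm_mul_le_s7 _ _
      _ = frobNorm U * frobNorm V := by rw [frobNorm_transpose_s7]
      _ ≤ σ * σ := mul_le_mul hU hV (frobNorm_nonneg _) (le_trans (frobNorm_nonneg _) hU)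
      _ = σ ^ 2 := (sq σ).symm
  have hVUball : frobNorm (V * Uᵀ) ≤ σ ^ 2 := by
    calc frobNorm (V * Uᵀ) ≤ frobNorm V * frobNorm Uᵀ := frobNorm_mul_le_s7 _ _
      _ = frobNorm V * frobNorm U := by rw [frobNorm_transpose_s7]
      _ ≤ σ * σ := mul_le_mul hV hU (frobNorm_nonneg _) (le_trans (frobNorm_nonneg _) hV)
      _ = σ ^ 2 := (sq σ).symm
  -- norms of the corrections
  have hccn : frobNorm (c * cᵀ) ≤ frobNorm c ^ 2 := by
    calc frobNorm (c * cᵀ) ≤ frobNorm c * frobNorm cᵀ := frobNorm_mul_le_s7 _ _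
      _ = frobNorm c ^ 2 := by rw [frobNorm_transpose_s7, sq]
  have hΔσ : frobNorm Δ ≤ σ * d := by
    have h1 : frobNorm (c * Uhᵀ) ≤ frobNorm c * frobNorm Uh := by
      refine (frobNorm_mul_le_s7 _ _).trans ?_
      rw [frobNorm_transpose_s7]
    have h2 : frobNorm (Uh * cᵀ) ≤ frobNorm Uh * frobNorm c := by
      refine (frobNorm_mul_le_s7 _ _).trans ?_
      rw [frobNorm_transpose_s7]
    have h3 := frobNorm_sub_le_s7 (c * Uhᵀ) (Uh * cᵀ)
    have hcnn : 0 ≤ frobNorm c := frobNorm_nonneg c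
    have : frobNorm Δ ≤ 2 * (frobNorm Uh * frobNorm c) := by
      rw [hΔ]; nlinarith
    calc frobNorm Δ ≤ 2 * (frobNorm Uh * frobNorm c) := this
      _ = frobNorm Uh * d := by rw [hcn]; ring
      _ ≤ σ * d := mul_le_mul_of_nonneg_right han hd0
  -- gradient bounds
  set G₁ : Matrix (Fin n) (Fin n) ℝ := grad (U * Vᵀ) with hG₁
  set G₂ : Matrix (Fin n) (Fin n) ℝ := grad (V * Uᵀ) with hG₂
  set G₃ : Matrix (Fin n) (Fin n) ℝ := grad X with hG₃
  have g1 : frobNorm (G₁ - grad (X + Δ)) ≤ L * frobNorm c ^ 2 := by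
    have h := hgradLip (U * Vᵀ) (X + Δ) hUVball hXp
    have he : U * Vᵀ - (X + Δ) = -(c * cᵀ) := by rw [hUV]; abel
    rw [he, frobNorm_neg] at h
    exact h.trans (mul_le_mul_of_nonneg_left hccn (le_of_lt hL))
  have g2 : frobNorm (G₂ - grad (X - Δ)) ≤ L * frobNorm c ^ 2 := by
    have h := hgradLip (V * Uᵀ) (X - Δ) hVUball hXm
    have he : V * Uᵀ - (X - Δ) = -(c * cᵀ) := by rw [hVU]; abel
    rw [he, frobNorm_neg] at h
    exact h.trans (mul_le_mul_of_nonneg_left hccn (le_of_lt hL))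
  have gd : frobNorm (G₂ - G₁) ≤ L * (2 * (σ * d)) := by
    have h := hgradLip (V * Uᵀ) (U * Vᵀ) hVUball hUVball
    have he : V * Uᵀ - U * Vᵀ = -(Δ + Δ) := by rw [hUV, hVU]; abel
    rw [he, frobNorm_neg] at h
    have h2 : frobNorm (Δ + Δ) ≤ 2 * (σ * d) := by
      have := frobNorm_add_le_s7 Δ Δ
      linarith [hΔσ]
    calc frobNorm (G₂ - G₁) ≤ L * frobNorm (Δ + Δ) := h
      _ ≤ L * (2 * (σ * d)) := mul_le_mul_of_nonneg_left h2 (le_of_lt hL)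
  have gsec : frobNorm (grad (X + Δ) + grad (X - Δ) - (2:ℝ) • G₃) ≤ L0 * frobNorm Δ ^ 2 :=
    secdiff grad hess hhess σ L0 hL0 hhessLip X Δ hXp hXm
  -- main decomposition
  have hdecomp : G₁ * V + G₂ * U - (2 : ℝ) • (G₃ * Uh)
      = (G₁ + G₂ - (2:ℝ) • G₃) * Uh + (G₂ - G₁) * c := by
    rw [hU', hV']
    simp only [Matrix.mul_add, Matrix.mul_sub, Matrix.add_mul, Matrix.sub_mul,
      Matrix.smul_mul, smul_sub]
    abel
  have hmain : frobNorm (G₁ * V + G₂ * U - (2 : ℝ) • (G₃ * Uh))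
      ≤ frobNorm (G₁ + G₂ - (2:ℝ) • G₃) * frobNorm Uh + frobNorm (G₂ - G₁) * frobNorm c := by
    rw [hdecomp]
    refine (frobNorm_add_le_s7 _ _).trans ?_
    exact add_le_add (frobNorm_mul_le_s7 _ _) (frobNorm_mul_le_s7 _ _)
  have hsplit : frobNorm (G₁ + G₂ - (2:ℝ) • G₃)
      ≤ L * frobNorm c ^ 2 + L * frobNorm c ^ 2 + L0 * frobNorm Δ ^ 2 := by
    have he : G₁ + G₂ - (2:ℝ) • G₃
        = (G₁ - grad (X + Δ)) + (G₂ - grad (X - Δ))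
          + (grad (X + Δ) + grad (X - Δ) - (2:ℝ) • G₃) := by abel
    rw [he]
    refine (frobNorm_add_le_s7 _ _).trans ?_
    refine add_le_add ((frobNorm_add_le_s7 _ _).trans (add_le_add g1 g2)) gsec
  -- numeric assembly
  have hΔ2 : frobNorm Δ ^ 2 ≤ (σ * d) ^ 2 := by
    have := frobNorm_nonneg Δ
    nlinarith [hΔσ]
  have hAnn : 0 ≤ frobNorm (G₁ + G₂ - (2:ℝ) • G₃) := frobNorm_nonneg _
  have hBnn : 0 ≤ frobNorm (G₂ - G₁) := frobNorm_nonneg _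
  have hσ0 : 0 ≤ σ := le_of_lt hσ
  have hA : frobNorm (G₁ + G₂ - (2:ℝ) • G₃) * frobNorm Uh
      ≤ (L * (2⁻¹ * d) ^ 2 + L * (2⁻¹ * d) ^ 2 + L0 * (σ * d) ^ 2) * σ := by
    refine mul_le_mul ?_ han (frobNorm_nonneg _) ?_
    · refine hsplit.trans ?_
      rw [hcn]
      have := le_of_lt hL
      nlinarith [hΔ2]
    · positivity
  have hB : frobNorm (G₂ - G₁) * frobNorm c ≤ (L * (2 * (σ * d))) * (2⁻¹ * d) := by
    rw [hcn]
    refine mul_le_mul gd (le_refl _) ?_ ?_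
    · positivity
    · positivity
  calc frobNorm (G₁ * V + G₂ * U - (2 : ℝ) • (G₃ * Uh))
      ≤ frobNorm (G₁ + G₂ - (2:ℝ) • G₃) * frobNorm Uh + frobNorm (G₂ - G₁) * frobNorm c :=
        hmain
    _ ≤ (L * (2⁻¹ * d) ^ 2 + L * (2⁻¹ * d) ^ 2 + L0 * (σ * d) ^ 2) * σ
        + (L * (2 * (σ * d))) * (2⁻¹ * d) := add_le_add hA hB
    _ = (L0 * σ ^ 3 + 3 / 2 * L * σ) * d ^ 2 := by ring
end
end
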